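/- (Lemma 3.1.) Let ι be a nonempty finite index set, n : ι → ℝ³ a family of unit vectors each with strictly positive third coordinate, w : ι → ℝ a family of strictly positive weights, g > 0 a real number, z : ι → ℝ a family of heights, and set z_max = max_{i ∈ ι} z(i) and c(i) = √(2g·(1/(2g) + z_max − z(i))) for each i. Then the linear map G : ℝ² → ℝ³ defined by G b = Σ_{i ∈ ι} w(i)·c(i) • V(n(i)) b has trivial kernel, and its range is a two-dimensional subspace of ℝ³. -/

import Mathlib

/-- The discrete velocity field matrix of equation (2.6). -/
noncomputable def Vmap (n : EuclideanSpace ℝ (Fin 3)) (b : EuclideanSpace ℝ (Fin 2)) :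
    EuclideanSpace ℝ (Fin 3) :=
  WithLp.toLp 2 ![b 0 - n 0 * (n 0 * b 0 + n 1 * b 1) / (1 + n 2),
    b 1 - n 1 * (n 0 * b 0 + n 1 * b 1) / (1 + n 2),
    n 0 * b 0 + n 1 * b 1]

lemma Vmap_key (n : EuclideanSpace ℝ (Fin 3)) (hn : ‖n‖ = 1) (h3 : 0 < n 2)
    (b : EuclideanSpace ℝ (Fin 2)) :
    n 2 * (b 0 ^ 2 + b 1 ^ 2) ≤ Vmap n b 0 * b 0 + Vmap n b 1 * b 1 := by
  have hsum : n 0 ^ 2 + n 1 ^ 2 + n 2 ^ 2 = 1 := by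
    have h := hn
    rw [EuclideanSpace.norm_eq] at h
    have h' : Real.sqrt (∑ i, n i ^ 2) = 1 := by simpa using h
    have := Real.sqrt_eq_one.mp h'
    simpa [Fin.sum_univ_three] using this
  have hpos : (0:ℝ) < 1 + n 2 := by linarith
  have e : Vmap n b 0 * b 0 + Vmap n b 1 * b 1 - n 2 * (b 0 ^ 2 + b 1 ^ 2)
      = (n 0 * b 1 - n 1 * b 0) ^ 2 / (1 + n 2) := by
    simp only [Vmap]
    norm_num
    field_simp
    ring_nf
    nlinarith [hsum, sq_nonneg (b 0), sq_nonneg (b 1)]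
  have hnn : (0:ℝ) ≤ (n 0 * b 1 - n 1 * b 0) ^ 2 / (1 + n 2) :=
    div_nonneg (sq_nonneg _) hpos.le
  linarith [e ▸ hnn]

/-- Lemma 3.1: the averaging operator composed with the gravity velocity
field (with gravity-induced speed magnitudes `c i`) has trivial kernel and
two-dimensional range. -/
theorem stmt5 {ι : Type*} [Fintype ι] [Nonempty ι]
    (n : ι → EuclideanSpace ℝ (Fin 3)) (hn : ∀ i, ‖n i‖ = 1) (hn3 : ∀ i, 0 < n i 2)
    (w : ι → ℝ) (hw : ∀ i, 0 < w i) (g : ℝ) (hg : 0 < g) (z : ι → ℝ)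
    (zmax : ℝ) (hzmax : zmax = Finset.univ.sup' Finset.univ_nonempty z)
    (c : ι → ℝ) (hc : ∀ i, c i = Real.sqrt (2 * g * (1 / (2 * g) + zmax - z i)))
    (G : EuclideanSpace ℝ (Fin 2) →ₗ[ℝ] EuclideanSpace ℝ (Fin 3))
    (hG : ∀ b, G b = ∑ i, (w i * c i) • Vmap (n i) b) :
    LinearMap.ker G = ⊥ ∧ Module.finrank ℝ (LinearMap.range G) = 2 := by
  have hcpos : ∀ i, 0 < c i := by
    intro i
    rw [hc i, Real.sqrt_pos]
    have hz : z i ≤ zmax := hzmax ▸ Finset.le_sup' z (Finset.mem_univ i)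
    have h1 : (0:ℝ) < 1 / (2 * g) := by positivity
    have : 0 < 1 / (2 * g) + zmax - z i := by linarith
    positivity
  have hinj : Function.Injective G := by
    rw [← LinearMap.ker_eq_bot, LinearMap.ker_eq_bot']
    intro b hb
    by_contra hb0
    -- some coordinate of b is nonzero
    have hbsq : 0 < b 0 ^ 2 + b 1 ^ 2 := by
      rcases eq_or_ne (b 0) 0 with h0 | h0
      · rcases eq_or_ne (b 1) 0 with h1 | h1
        · exact absurd (by ext i; fin_cases i <;> simp [h0, h1]) hb0
        · nlinarith [sq_nonneg (b 0), sq_pos_of_ne_zero h1]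
      · nlinarith [sq_nonneg (b 1), sq_pos_of_ne_zero h0]
    have happ : ∀ j, (G b) j = ∑ i, (w i * c i) * (Vmap (n i) b j) := by
      intro j
      rw [hG]
      have := map_sum (EuclideanSpace.proj j : EuclideanSpace ℝ (Fin 3) →L[ℝ] ℝ)
        (fun i => (w i * c i) • Vmap (n i) b) Finset.univ
      exact this
    have hzero : (G b) 0 * b 0 + (G b) 1 * b 1 = 0 := by
      rw [hb]; simp
    have hsumE : (G b) 0 * b 0 + (G b) 1 * b 1
        = ∑ i, (w i * c i) * (Vmap (n i) b 0 * b 0 + Vmap (n i) b 1 * b 1) := by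
      rw [happ 0, happ 1, Finset.sum_mul, Finset.sum_mul, ← Finset.sum_add_distrib]
      exact Finset.sum_congr rfl fun i _ => by ring
    have hposum : 0 < ∑ i, (w i * c i) * (Vmap (n i) b 0 * b 0 + Vmap (n i) b 1 * b 1) := by
      apply Finset.sum_pos
      · intro i _
        have hkey := Vmap_key (n i) (hn i) (hn3 i) b
        have : 0 < n i 2 * (b 0 ^ 2 + b 1 ^ 2) := mul_pos (hn3 i) hbsq
        exact mul_pos (mul_pos (hw i) (hcpos i)) (lt_of_lt_of_le this hkey)
      · exact Finset.univ_nonempty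
    rw [hsumE] at hzero
    exact absurd hzero hposum.ne'
  refine ⟨LinearMap.ker_eq_bot.mpr hinj, ?_⟩
  rw [LinearMap.finrank_range_of_inj hinj]
  simp
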